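/- Let E, Z be Banach spaces, K ⊆ Z a closed convex cone with nonempty interior, X ⊆ E a compact convex set, f : X → ℝ convex and lower semicontinuous, and g : X → Z K-convex and continuous. Suppose the Slater condition holds: there exists x̂ ∈ X with -g(x̂) ∈ int(K). Then the perturbation function v(z) := inf{ f(x) : x ∈ X, g(x) ⪯_K z } is continuous at 0 ∈ Z. -/
import Mathlib

open Metric Set Filter Topology

/-- under the Slater condition, the perturbation function `v` is
continuous at `0`. -/
theorem stmt_2
    {E Z : Type*} [NormedAddCommGroup E] [NormedSpace ℝ E] [CompleteSpace E]
    [NormedAddCommGroup Z] [NormedSpace ℝ Z] [CompleteSpace Z]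
    (K : Set Z) (hKclosed : IsClosed K) (hKconv : Convex ℝ K)
    (hKcone : ∀ c : ℝ, 0 ≤ c → ∀ z ∈ K, c • z ∈ K)
    (hKint : (interior K).Nonempty)
    (X : Set E) (hX : Convex ℝ X) (hXcomp : IsCompact X)
    (f : E → ℝ) (hf : ConvexOn ℝ X f) (hflsc : LowerSemicontinuousOn f X)
    (g : E → Z) (hgcont : ContinuousOn g X)
    (hg : ∀ x₁ ∈ X, ∀ x₂ ∈ X, ∀ t ∈ Set.Icc (0:ℝ) 1,
      t • g x₁ + (1 - t) • g x₂ - g (t • x₁ + (1 - t) • x₂) ∈ K)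
    (hSlater : ∃ xh ∈ X, -g xh ∈ interior K)
    (v : Z → EReal)
    (hv : ∀ z, v z = sInf ((fun x => (f x : EReal)) '' {x | x ∈ X ∧ z - g x ∈ K})) :
    ContinuousAt v 0 := by
  obtain ⟨xh, hxhX, hxhK⟩ := hSlater
  -- f is bounded below on X
  have hbdd : ∃ m : ℝ, ∀ x ∈ X, m ≤ f x := by
    have hU : ∀ x ∈ X, {x' | x' ∈ X → f x - 1 < f x'} ∈ 𝓝 x := by
      intro x hx
      have h := hflsc x hx (f x - 1) (by linarith)
      rwa [eventually_nhdsWithin_iff] at h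
    obtain ⟨t, htX, hcov⟩ := hXcomp.elim_nhds_subcover _ hU
    rcases t.eq_empty_or_nonempty with rfl | hte
    · exact ⟨0, fun x hx => absurd (hcov hx) (by simp)⟩
    refine ⟨t.inf' hte (fun x => f x - 1), fun x hx => ?_⟩
    obtain ⟨y, hyt, hy⟩ := Set.mem_iUnion₂.1 (hcov hx)
    exact (Finset.inf'_le _ hyt).trans (le_of_lt (hy hx))
  obtain ⟨m, hm⟩ := hbdd
  -- K is closed under addition
  have hKadd : ∀ a ∈ K, ∀ b ∈ K, a + b ∈ K := by
    intro a ha b hb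
    have h1 : (1/2 : ℝ) • a + (1/2 : ℝ) • b ∈ K :=
      hKconv ha hb (by norm_num) (by norm_num) (by norm_num)
    have h2 := hKcone 2 (by norm_num) _ h1
    have : (2:ℝ) • ((1/2 : ℝ) • a + (1/2 : ℝ) • b) = a + b := by
      rw [smul_add, smul_smul, smul_smul]; norm_num
    rwa [this] at h2
  -- a ball around 0 where the Slater point is feasible
  obtain ⟨δ, hδpos, hδ⟩ := Metric.isOpen_iff.1 isOpen_interior (-g xh) hxhK
  have hfeas : ∀ z ∈ Metric.ball (0:Z) δ, z - g xh ∈ K := by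
    intro z hz
    refine interior_subset (hδ ?_)
    simpa [dist_eq_norm] using (by simpa [dist_eq_norm] using hz : ‖z‖ < δ)
  set F : Z → Set E := fun z => {x | x ∈ X ∧ z - g x ∈ K} with hF
  set w : Z → ℝ := fun z => sInf (f '' F z) with hw
  have hbddb : ∀ z, BddBelow (f '' F z) := by
    intro z
    refine ⟨m, ?_⟩
    rintro _ ⟨x, hx, rfl⟩
    exact hm x hx.1
  have hne : ∀ z ∈ Metric.ball (0:Z) δ, (f '' F z).Nonempty :=
    fun z hz => ⟨f xh, xh, ⟨hxhX, hfeas z hz⟩, rfl⟩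
  have hwle : ∀ z ∈ Metric.ball (0:Z) δ, w z ≤ f xh :=
    fun z hz => csInf_le (hbddb z) ⟨xh, ⟨hxhX, hfeas z hz⟩, rfl⟩
  -- w is convex on the ball
  have hwconv : ConvexOn ℝ (Metric.ball (0:Z) δ) w := by
    refine ⟨convex_ball _ _, ?_⟩
    intro z₁ hz₁ z₂ hz₂ a b ha hb hab
    refine le_of_forall_pos_le_add ?_
    intro ε hε
    obtain ⟨y₁, hy₁, hy₁'⟩ := Real.lt_sInf_add_pos (hne z₁ hz₁) hε
    obtain ⟨y₂, hy₂, hy₂'⟩ := Real.lt_sInf_add_pos (hne z₂ hz₂) hε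
    obtain ⟨x₁, hx₁, rfl⟩ := hy₁
    obtain ⟨x₂, hx₂, rfl⟩ := hy₂
    have hbeq : b = 1 - a := by linarith
    have hxX : a • x₁ + b • x₂ ∈ X := hX hx₁.1 hx₂.1 ha hb hab
    have hmemK : (a • z₁ + b • z₂) - g (a • x₁ + b • x₂) ∈ K := by
      have h1 : a • (z₁ - g x₁) ∈ K := hKcone a ha _ hx₁.2
      have h2 : b • (z₂ - g x₂) ∈ K := hKcone b hb _ hx₂.2
      have h3 : a • g x₁ + (1 - a) • g x₂ - g (a • x₁ + (1 - a) • x₂) ∈ K :=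
        hg x₁ hx₁.1 x₂ hx₂.1 a ⟨ha, by linarith⟩
      rw [← hbeq] at h3
      have := hKadd _ (hKadd _ h1 _ h2) _ h3
      have heq : a • (z₁ - g x₁) + b • (z₂ - g x₂) +
          (a • g x₁ + b • g x₂ - g (a • x₁ + b • x₂)) =
          (a • z₁ + b • z₂) - g (a • x₁ + b • x₂) := by
        simp only [smul_sub]; abel
      rwa [heq] at this
    have hfle : f (a • x₁ + b • x₂) ≤ a * f x₁ + b * f x₂ :=
      hf.2 hx₁.1 hx₂.1 ha hb hab
    have hwle' : w (a • z₁ + b • z₂) ≤ f (a • x₁ + b • x₂) :=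
      csInf_le (hbddb _) ⟨a • x₁ + b • x₂, ⟨hxX, hmemK⟩, rfl⟩
    have : a * f x₁ + b * f x₂ ≤ a * (w z₁ + ε) + b * (w z₂ + ε) := by
      have := mul_le_mul_of_nonneg_left hy₁'.le ha
      have := mul_le_mul_of_nonneg_left hy₂'.le hb
      nlinarith
    calc w (a • z₁ + b • z₂) ≤ a * f x₁ + b * f x₂ := hwle'.trans hfle
      _ ≤ a * (w z₁ + ε) + b * (w z₂ + ε) := this
      _ = a * w z₁ + b * w z₂ + ε := by ring_nf; nlinarith [hab]
  -- w is continuous on the ball, hence at 0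
  have hcont : ContinuousOn w (Metric.ball (0:Z) δ) := by
    have htfae := (hwconv.continuousOn_tfae Metric.isOpen_ball
      ⟨0, Metric.mem_ball_self hδpos⟩).out 3 1
    refine htfae.1 ⟨0, Metric.mem_ball_self hδpos, f xh, ?_⟩
    rw [Filter.eventually_map]
    filter_upwards [Metric.ball_mem_nhds (0:Z) hδpos] with z hz
    exact hwle z hz
  have hw0 : ContinuousAt w 0 :=
    hcont.continuousAt (Metric.ball_mem_nhds _ hδpos)
  -- v agrees with the coercion of w near 0
  have heq : ∀ z ∈ Metric.ball (0:Z) δ, v z = ((w z : ℝ) : EReal) := by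
    intro z hz
    rw [hv z]
    have hmono : Monotone ((↑) : ℝ → EReal) := fun x y h => EReal.coe_le_coe_iff.2 h
    have := Monotone.map_csInf_of_continuousAt
      (continuous_coe_real_ereal.continuousAt) hmono (hne z hz) (hbddb z)
    rw [show {x | x ∈ X ∧ z - g x ∈ K} = F z from rfl,
      show (fun x => ((f x : ℝ) : EReal)) = Real.toEReal ∘ f from rfl,
      Set.image_comp, ← this]
  have heq' : (fun z => ((w z : ℝ) : EReal)) =ᶠ[𝓝 (0:Z)] v := by
    filter_upwards [Metric.ball_mem_nhds (0:Z) hδpos] with z hz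
    exact (heq z hz).symm
  exact ContinuousAt.congr (continuous_coe_real_ereal.continuousAt.comp hw0) heq'
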